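/- Let σ_c > 0 and δ_u > 0, and let g(·; d) be the damaged cohesive potential with damage value d ∈ [0, δ_u]. Then on each of the open intervals (0, d), (d, δ_u), and (δ_u, ∞), the function δ ↦ g(δ; d) is twice differentiable with second derivative equal to either 0 or 2q = −σ_c/δ_u; in particular, |∂²g/∂δ²(δ; d)| ≤ σ_c/δ_u at every such δ, a bound independent of the damage value d. -/

import Mathlib

/-- On each open interval between breakpoints, the damaged cohesive potential is
twice differentiable with second derivative `0` or `2q = -σ_c/δ_u`; hence the
second derivative is uniformly bounded by `σ_c/δ_u`, independently of `d`. -/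
theorem stmt_12 (σc δu d : ℝ) (hσ : 0 < σc) (hδ : 0 < δu)
    (hd : d ∈ Set.Icc (0 : ℝ) δu)
    (q : ℝ) (hq : q = -(σc / (2 * δu)))
    (l : ℝ → ℝ) (hl : ∀ d', l d' = -2 * (δu - d') * q)
    (g : ℝ → ℝ)
    (hg : ∀ δ, g δ = if δ ≤ d then l d * δ
      else if δ ≤ δu then l d * δ + q * (δ - d) ^ 2
      else l d * δu + q * (δu - d) ^ 2) :
    (∀ δ ∈ Set.Ioo 0 d, HasDerivAt (deriv g) 0 δ) ∧
    (∀ δ ∈ Set.Ioo d δu, HasDerivAt (deriv g) (2 * q) δ) ∧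
    (∀ δ ∈ Set.Ioi δu, HasDerivAt (deriv g) 0 δ) ∧
    (∀ δ ∈ Set.Ioo 0 d ∪ Set.Ioo d δu ∪ Set.Ioi δu,
      |deriv (deriv g) δ| ≤ σc / δu) := by
  -- derivative on segment 1
  have hd1 : ∀ x ∈ Set.Iio d, deriv g x = l d := by
    intro x hx
    have hev : g =ᶠ[nhds x] (fun y => l d * y) := by
      filter_upwards [Iio_mem_nhds hx] with y hy
      rw [hg y, if_pos (le_of_lt hy)]
    rw [hev.deriv_eq]
    simpa using ((hasDerivAt_id x).const_mul (l d)).deriv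
  have hd2 : ∀ x ∈ Set.Ioo d δu, deriv g x = l d + 2 * q * (x - d) := by
    intro x hx
    have hev : g =ᶠ[nhds x] (fun y => l d * y + q * (y - d) ^ 2) := by
      filter_upwards [Ioo_mem_nhds hx.1 hx.2] with y hy
      rw [hg y, if_neg (not_le.mpr hy.1), if_pos (le_of_lt hy.2)]
    have h1 : HasDerivAt (fun y => l d * y + q * (y - d) ^ 2)
        (l d + 2 * q * (x - d)) x := by
      have := (((hasDerivAt_id x).sub_const d).pow 2).const_mul q
      have := (((hasDerivAt_id x).const_mul (l d))).add this
      refine this.congr_deriv ?_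
      simp only [id]
      ring
    rw [hev.deriv_eq, h1.deriv]
  have hd3 : ∀ x ∈ Set.Ioi δu, deriv g x = 0 := by
    intro x hx
    have hev : g =ᶠ[nhds x] (fun _ => l d * δu + q * (δu - d) ^ 2) := by
      filter_upwards [Ioi_mem_nhds hx] with y hy
      have h1 : ¬ y ≤ d := not_le.mpr (lt_of_le_of_lt hd.2 hy)
      rw [hg y, if_neg h1, if_neg (not_le.mpr hy)]
    rw [hev.deriv_eq, deriv_const]
  have key1 : ∀ δ ∈ Set.Ioo 0 d, HasDerivAt (deriv g) 0 δ := by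
    intro δ hδ'
    refine (hasDerivAt_const δ (l d)).congr_of_eventuallyEq ?_
    filter_upwards [Iio_mem_nhds hδ'.2] with y hy
    exact hd1 y hy
  have key2 : ∀ δ ∈ Set.Ioo d δu, HasDerivAt (deriv g) (2 * q) δ := by
    intro δ hδ'
    have h1 : HasDerivAt (fun x => l d + 2 * q * (x - d)) (2 * q) δ := by
      have := (((hasDerivAt_id δ).sub_const d).const_mul (2 * q)).const_add (l d)
      simpa using this
    refine h1.congr_of_eventuallyEq ?_
    filter_upwards [Ioo_mem_nhds hδ'.1 hδ'.2] with y hy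
    exact hd2 y hy
  have key3 : ∀ δ ∈ Set.Ioi δu, HasDerivAt (deriv g) 0 δ := by
    intro δ hδ'
    refine (hasDerivAt_const δ (0:ℝ)).congr_of_eventuallyEq ?_
    filter_upwards [Ioi_mem_nhds hδ'] with y hy
    exact hd3 y hy
  refine ⟨key1, key2, key3, ?_⟩
  have hpos : 0 < σc / δu := div_pos hσ hδ
  have h2q : |2 * q| = σc / δu := by
    rw [hq]
    rw [abs_of_nonpos (by nlinarith [div_pos hσ (by linarith : (0:ℝ) < 2 * δu)])]
    field_simp
  intro δ hδ'
  rcases hδ' with (h | h) | h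
  · rw [(key1 δ h).deriv]; simpa using le_of_lt hpos
  · rw [(key2 δ h).deriv, h2q]
  · rw [(key3 δ h).deriv]; simpa using le_of_lt hpos
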